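/- Let p = 2, so q = 2^s and F = GF(2^s). In the binary code of the Type I-B graph G(2,s), the indicator vector of the set {r, v_0, v_1} ∪ {(0,j) : j ∈ F \ {0}} ∪ {(y,y) : y ∈ F \ {0}} is a codeword of Hamming weight 2q + 1. Consequently the minimum distance d_min of this code satisfies q + 1 ≤ d_min ≤ 2q + 1. -/

import Mathlib

open scoped Classical

namespace TypeIB

/-- The nonzero elements of `F`. -/
abbrev Fstar (F : Type*) [Field F] := {j : F // j ≠ 0}

/-- Variable nodes of the Type I-B graph: the root `r`, the nodes `v_y` (y ∈ F) and the
nodes `(i,j)` with `i ∈ F`, `j ∈ F \ {0}`. -/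
abbrev VN (F : Type*) [Field F] := Unit ⊕ (F ⊕ (F × Fstar F))

/-- Constraint nodes of the Type I-B graph: the root `r'`, the nodes `c_i` (i ∈ F) and the
nodes `(i,j)'` with `i ∈ F`, `j ∈ F \ {0}`. -/
abbrev CN (F : Type*) [Field F] := Unit ⊕ (F ⊕ (F × Fstar F))

/-- Adjacency of the Type I-B graph `G(p,s)`:
`r ~ c_i` for every `i`; `c_i ~ (i,j)` for every `j ≠ 0`; `r' ~ v_y` for every `y`;
`v_y ~ (y,j)'` for every `j ≠ 0`; and `(i,j) ~ (k, j + i·k)'` whenever `j + i·k ≠ 0`,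
except that the edges `(0,j) ~ (0,j)'` are omitted. -/
def adj (F : Type*) [Field F] : VN F → CN F → Prop
  | Sum.inl _, Sum.inl _ => False
  | Sum.inl _, Sum.inr (Sum.inl _) => True              -- r ~ c_i
  | Sum.inl _, Sum.inr (Sum.inr _) => False
  | Sum.inr (Sum.inl _), Sum.inl _ => True              -- v_y ~ r'
  | Sum.inr (Sum.inl _), Sum.inr (Sum.inl _) => False
  | Sum.inr (Sum.inl y), Sum.inr (Sum.inr (a, _)) => a = y   -- v_y ~ (y,b)'
  | Sum.inr (Sum.inr _), Sum.inl _ => False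
  | Sum.inr (Sum.inr (i, _)), Sum.inr (Sum.inl k) => k = i   -- c_i ~ (i,j)
  | Sum.inr (Sum.inr (i, j)), Sum.inr (Sum.inr (a, b)) =>
      (b : F) = (j : F) + i * a ∧ ¬(i = 0 ∧ a = 0)

end TypeIB

/-- Hamming weight of a vector: the number of nonzero coordinates. -/
noncomputable def hamWt {V K : Type*} [Zero K] (x : V → K) : ℕ :=
  Nat.card {v : V // x v ≠ 0}

namespace TypeIB

/-- The code of the Type I-B graph over `K`: vectors indexed by the variable nodes whose sum
over the neighbourhood of each constraint node vanishes. -/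
def InCode (F : Type*) [Field F] [Fintype F] (K : Type*) [AddCommMonoid K]
    (x : VN F → K) : Prop :=
  ∀ c : CN F, (∑ v : VN F, if adj F v c then x v else 0) = 0

/-- The minimum distance of the code of the Type I-B graph over `K`: the least Hamming
weight of a nonzero codeword. -/
noncomputable def dmin (F : Type*) [Field F] [Fintype F]
    (K : Type*) [AddCommMonoid K] : ℕ :=
  sInf {w | ∃ x : VN F → K, InCode F K x ∧ x ≠ 0 ∧ hamWt x = w}

end TypeIB

/-- The indicator vector of the set `{r, v_0, v_1} ∪ {(0,j) : j ≠ 0} ∪ {(y,y) : y ≠ 0}`. -/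
noncomputable def cw (F : Type*) [Field F] : TypeIB.VN F → ZMod 2
  | Sum.inl _ => 1
  | Sum.inr (Sum.inl y) => if y = 0 ∨ y = 1 then 1 else 0
  | Sum.inr (Sum.inr (i, j)) => if i = 0 ∨ i = (j : F) then 1 else 0


section AuxLemmas

variable {F : Type*} [Field F] [Fintype F]

private lemma sum_fstar {M : Type*} [AddCommMonoid M] (g : F → M) :
    ∑ j : TypeIB.Fstar F, g (j : F) = ∑ j : F, if j = 0 then 0 else g j := by
  rw [← Finset.sum_subtype (Finset.univ.filter (fun j : F => j ≠ 0)) (by simp) g,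
    Finset.sum_filter]
  exact Finset.sum_congr rfl (fun j _ => by by_cases h : j = 0 <;> simp [h])

private lemma sum_VN {M : Type*} [AddCommMonoid M] (f : TypeIB.VN F → M) :
    ∑ v : TypeIB.VN F, f v = f (Sum.inl ()) +
      ((∑ y : F, f (Sum.inr (Sum.inl y))) +
        ∑ i : F, ∑ j : TypeIB.Fstar F, f (Sum.inr (Sum.inr (i, j)))) := by
  rw [Fintype.sum_sum_type, Fintype.sum_sum_type, Fintype.sum_prod_type]
  simp

private lemma sum_ind_ne (A : ℕ) :
    (∑ j : F, if j = 0 then 0 else A) = (Fintype.card F - 1) * A := by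
  have h1 : (∑ j : F, if j = 0 then (A:ℕ) else 0) = A := by simp [Finset.sum_ite_eq']
  have e1 : ∀ j : F, (if j = 0 then (0:ℕ) else A) + (if j = 0 then A else 0) = A := by
    intro j; by_cases h : j = 0 <;> simp [h]
  have e2 : (∑ j : F, if j = 0 then (0:ℕ) else A) + (∑ j : F, if j = 0 then (A:ℕ) else 0)
      = Fintype.card F * A := by
    rw [← Finset.sum_add_distrib, Finset.sum_congr rfl (fun j _ => e1 j)]
    simp [Finset.card_univ, mul_comm]
  rw [h1] at e2
  have hc : 1 ≤ Fintype.card F := Fintype.card_pos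
  have h3 : A ≤ Fintype.card F * A := Nat.le_mul_of_pos_left A Fintype.card_pos
  rw [Nat.sub_one_mul]
  omega

private lemma cw_code (s : ℕ) (hs : 0 < s) (hF : Fintype.card F = 2 ^ s) [CharP F 2] :
    TypeIB.InCode F (ZMod 2) (cw F) := by
  intro c
  have h2 : ∀ a : F, a + a = 0 := fun a => CharTwo.add_self_eq_zero a
  have h10 : (0 : F) ≠ 1 := zero_ne_one
  have hq0 : ((Fintype.card F : ℕ) : ZMod 2) = 0 := by
    rw [hF]; push_cast; rw [(by decide : (2 : ZMod 2) = 0), zero_pow hs.ne']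
  rw [sum_VN]
  obtain _ | k | ⟨a, b⟩ := c
  · -- r' constraint
    unfold TypeIB.adj
    simp only [TypeIB.adj, if_false, if_true, Finset.sum_const_zero, ite_self, cw]
    have : ∀ y : F, (if y = 0 ∨ y = 1 then (1 : ZMod 2) else 0) =
        (if y = 0 then 1 else 0) + (if y = 1 then 1 else 0) := by
      intro y
      by_cases h0 : y = 0 <;> by_cases h1 : y = 1 <;>
        simp [h0, h1] at * <;> simp_all
    rw [Finset.sum_congr rfl (fun y _ => this y), Finset.sum_add_distrib]
    simp [Finset.sum_ite_eq']
    decide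
  · -- c_k constraint
    unfold TypeIB.adj
    simp only [TypeIB.adj, if_false, if_true, Finset.sum_const_zero, ite_self, cw]
    have step1 : ∀ i : F, (∑ j : TypeIB.Fstar F,
        if k = i then (if i = 0 ∨ i = (j : F) then (1 : ZMod 2) else 0) else 0) =
        (if k = i then (∑ j : TypeIB.Fstar F, if i = 0 ∨ i = (j : F) then (1 : ZMod 2) else 0) else 0) := by
      intro i; split <;> simp
    rw [Finset.sum_congr rfl (fun i _ => step1 i), Finset.sum_ite_eq]
    simp only [Finset.mem_univ, if_true]
    rw [sum_fstar (fun j : F => if k = 0 ∨ k = j then (1 : ZMod 2) else 0)]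
    by_cases hk : k = 0
    · subst hk
      have : ∀ j : F, (if j = 0 then 0 else if (0:F) = 0 ∨ (0:F) = j then (1 : ZMod 2) else 0)
          = 1 + (if j = 0 then 1 else 0) := by
        intro j; by_cases hj : j = 0 <;> simp [hj] <;> decide
      rw [Finset.sum_congr rfl (fun j _ => this j), Finset.sum_add_distrib]
      simp [Finset.sum_ite_eq', hq0]
      decide
    · have : ∀ j : F, (if j = 0 then 0 else if k = 0 ∨ k = j then (1 : ZMod 2) else 0)
          = (if j = k then 1 else 0) := by
        intro j
        rcases eq_or_ne j 0 with hj | hj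
        · subst hj; simp [Ne.symm hk]
        · rcases eq_or_ne j k with hjk | hjk
          · subst hjk; simp [hj, hk]
          · simp [hj, hjk, Ne.symm hjk, hk]
      rw [Finset.sum_congr rfl (fun j _ => this j)]
      simp [Finset.sum_ite_eq']
      decide
  · -- (a,b)' constraint
    unfold TypeIB.adj
    simp only [TypeIB.adj, if_false, if_true, Finset.sum_const_zero, ite_self, cw]
    rw [Finset.sum_ite_eq]
    simp only [Finset.mem_univ, if_true]
    have inner : ∀ i : F, (∑ j : TypeIB.Fstar F,
        if ((b : F) = (j : F) + i * a ∧ ¬(i = 0 ∧ a = 0)) then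
          (if i = 0 ∨ i = (j : F) then (1 : ZMod 2) else 0) else 0) =
        (if ((b : F) + i * a ≠ 0 ∧ ¬(i = 0 ∧ a = 0) ∧ (i = 0 ∨ i = (b : F) + i * a))
          then 1 else 0) := by
      intro i
      rw [sum_fstar (fun j : F =>
        if ((b : F) = j + i * a ∧ ¬(i = 0 ∧ a = 0)) then
          (if i = 0 ∨ i = j then (1 : ZMod 2) else 0) else 0)]
      have hbj : ∀ j : F, ((b : F) = j + i * a) ↔ (j = (b : F) + i * a) := by
        intro j
        constructor <;> intro h <;> linear_combination -h - h2 (i * a)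
      have pointwise : ∀ j : F,
          (if j = 0 then 0 else if ((b : F) = j + i * a ∧ ¬(i = 0 ∧ a = 0)) then
            (if i = 0 ∨ i = j then (1 : ZMod 2) else 0) else 0) =
          (if j = (b : F) + i * a then
            (if ((b : F) + i * a ≠ 0 ∧ ¬(i = 0 ∧ a = 0) ∧ (i = 0 ∨ i = (b : F) + i * a))
              then 1 else 0) else 0) := by
        intro j
        rcases eq_or_ne j ((b : F) + i * a) with hj | hj
        · subst hj
          have hb2 : (b : F) = ((b : F) + i * a) + i * a := by
            linear_combination - h2 (i * a)
          by_cases hz : (b : F) + i * a = 0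
          · simp [hz]
          · rw [if_neg hz, if_pos rfl]
            simp only [ne_eq, hz, not_false_iff, true_and]
            rw [ite_and, if_pos hb2, ite_and]
        · have hcon : ¬((b : F) = j + i * a ∧ ¬(i = 0 ∧ a = 0)) :=
            fun h => hj ((hbj j).mp h.1)
          rw [if_neg hj]
          rcases eq_or_ne j 0 with h0 | h0
          · rw [if_pos h0]
          · rw [if_neg h0, if_neg hcon]
      rw [Finset.sum_congr rfl (fun j _ => pointwise j), Finset.sum_ite_eq']
      simp
    have inner' : ∀ i : F, (∑ j : TypeIB.Fstar F,
        @ite (ZMod 2) ((b : F) = (j : F) + i * a ∧ ¬(i = 0 ∧ a = 0)) (Classical.propDecidable _)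
          (if i = 0 ∨ i = (j : F) then (1 : ZMod 2) else 0) 0) =
        (if ((b : F) + i * a ≠ 0 ∧ ¬(i = 0 ∧ a = 0) ∧ (i = 0 ∨ i = (b : F) + i * a))
          then 1 else 0) :=
      fun i => by convert inner i
    rw [Finset.sum_congr rfl (fun i _ => inner' i)]
    by_cases ha0 : a = 0
    · subst ha0
      have pw : ∀ i : F, (if ((b : F) + i * 0 ≠ 0 ∧ ¬(i = 0 ∧ (0 : F) = 0) ∧
          (i = 0 ∨ i = (b : F) + i * 0)) then (1 : ZMod 2) else 0) =
          (if i = (b : F) then 1 else 0) := by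
        intro i
        rcases eq_or_ne i (b : F) with h | h
        · subst h; simp [b.2]
        · by_cases hi : i = 0 <;> simp [h, hi, b.2, Ne.symm b.2]
      rw [Finset.sum_congr rfl (fun i _ => pw i)]
      simp [Finset.sum_ite_eq']
      decide
    · by_cases ha1 : a = 1
      · subst ha1
        have pw : ∀ i : F, (if ((b : F) + i * 1 ≠ 0 ∧ ¬(i = 0 ∧ (1 : F) = 0) ∧
            (i = 0 ∨ i = (b : F) + i * 1)) then (1 : ZMod 2) else 0) =
            (if i = 0 then 1 else 0) := by
          intro i
          have hni : ¬(i = (b : F) + i * 1) := by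
            intro h
            exact b.2 (by linear_combination - h)
          rcases eq_or_ne i 0 with h | h
          · subst h; simp [b.2, hni]
          · simp [h, hni]
            exact fun _ => b.2
        rw [Finset.sum_congr rfl (fun i _ => pw i)]
        simp [Finset.sum_ite_eq']
        decide
      · -- a ∉ {0, 1}
        have hA : (1 : F) + a ≠ 0 := by
          intro h
          exact ha1 (by linear_combination h - h2 1)
        set c : F := (b : F) * ((1 : F) + a)⁻¹ with hc
        have hc0 : c ≠ 0 := mul_ne_zero b.2 (inv_ne_zero hA)
        have key : ∀ i : F, (i = (b : F) + i * a) ↔ i = c := by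
          intro i
          rw [hc, eq_mul_inv_iff_mul_eq₀ hA]
          constructor <;> intro h
          · linear_combination h + h2 (i * a)
          · linear_combination h - h2 (i * a)
        have pw : ∀ i : F, (if ((b : F) + i * a ≠ 0 ∧ ¬(i = 0 ∧ a = 0) ∧
            (i = 0 ∨ i = (b : F) + i * a)) then (1 : ZMod 2) else 0) =
            (if i = 0 then 1 else 0) + (if i = c then 1 else 0) := by
          intro i
          rcases eq_or_ne i 0 with h | h
          · subst h
            simp [b.2, ha0, Ne.symm hc0]
          · rcases eq_or_ne i c with h2' | h2'
            · have hic : i = (b : F) + i * a := (key i).mpr h2'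
              rw [if_pos ⟨by rw [← hic]; exact h, fun hh => ha0 hh.2, Or.inr hic⟩]
              simp [h, h2', hc0]
            · have : ¬(i = (b : F) + i * a) := fun hh => h2' ((key i).mp hh)
              simp [h, h2', this]
        rw [Finset.sum_congr rfl (fun i _ => pw i), Finset.sum_add_distrib]
        simp [Finset.sum_ite_eq', ha0, ha1]
        decide

private lemma cw_wt : hamWt (cw F) = 2 * Fintype.card F - 1 + 2 := by
  have hzo : (0:F) ≠ 1 := zero_ne_one
  rw [hamWt, Nat.card_eq_fintype_card, Fintype.card_subtype, Finset.card_filter]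
  rw [sum_VN (fun v => if cw F v ≠ 0 then 1 else 0)]
  have t1 : (if cw F (Sum.inl ()) ≠ 0 then (1:ℕ) else 0) = 1 := by simp [cw]
  have t2 : (∑ y : F, if cw F (Sum.inr (Sum.inl y)) ≠ 0 then (1:ℕ) else 0) = 2 := by
    have : ∀ y : F, (if cw F (Sum.inr (Sum.inl y)) ≠ 0 then (1:ℕ) else 0) =
        (if y = 0 then 1 else 0) + (if y = 1 then 1 else 0) := by
      intro y
      by_cases h0 : y = 0
      · subst h0; simp [cw, hzo]
      · by_cases h1 : y = 1 <;> simp [cw, h0, h1]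
    rw [Finset.sum_congr rfl (fun y _ => this y), Finset.sum_add_distrib]
    simp [Finset.sum_ite_eq']
  have t3 : (∑ i : F, ∑ j : TypeIB.Fstar F,
      if cw F (Sum.inr (Sum.inr (i, j))) ≠ 0 then (1:ℕ) else 0) = 2 * (Fintype.card F - 1) := by
    have inner : ∀ i : F, (∑ j : TypeIB.Fstar F,
        if cw F (Sum.inr (Sum.inr (i, j))) ≠ 0 then (1:ℕ) else 0) =
        (if i = 0 then Fintype.card F - 1 else 1) := by
      intro i
      have pw : ∀ j : TypeIB.Fstar F, (if cw F (Sum.inr (Sum.inr (i, j))) ≠ 0 then (1:ℕ) else 0)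
          = (if i = 0 ∨ i = (j:F) then 1 else 0) := by
        intro j; by_cases h : i = 0 ∨ i = (j:F) <;> simp [cw, h]
      rw [Finset.sum_congr rfl (fun j _ => pw j),
        sum_fstar (fun j : F => if i = 0 ∨ i = j then (1:ℕ) else 0)]
      by_cases hi : i = 0
      · subst hi
        have : ∀ j : F, (if j = 0 then 0 else if (0:F) = 0 ∨ (0:F) = j then (1:ℕ) else 0)
            = (if j = 0 then 0 else 1) := by
          intro j; by_cases h : j = 0 <;> simp [h]
        rw [Finset.sum_congr rfl (fun j _ => this j), sum_ind_ne 1]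
        simp
      · have : ∀ j : F, (if j = 0 then 0 else if i = 0 ∨ i = j then (1:ℕ) else 0)
            = (if j = i then 1 else 0) := by
          intro j
          rcases eq_or_ne j 0 with hj | hj
          · subst hj; simp [hi, Ne.symm hi]
          · rcases eq_or_ne j i with hji | hji
            · subst hji; simp [hj, hi]
            · simp [hj, hji, hi, Ne.symm hji]
        rw [Finset.sum_congr rfl (fun j _ => this j)]
        simp [Finset.sum_ite_eq', hi]
    rw [Finset.sum_congr rfl (fun i _ => inner i)]
    have e1 : ∀ i : F, (if i = 0 then Fintype.card F - 1 else 1)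
        = (if i = 0 then Fintype.card F - 1 else 0) + (if i = 0 then 0 else 1) := by
      intro i; by_cases h : i = 0 <;> simp [h]
    rw [Finset.sum_congr rfl (fun i _ => e1 i), Finset.sum_add_distrib, sum_ind_ne 1]
    simp [Finset.sum_ite_eq']
    omega
  rw [t1, t2, t3]
  have hc : 1 ≤ Fintype.card F := Fintype.card_pos
  omega

private lemma lower_bound [CharP F 2] (x : TypeIB.VN F → ZMod 2)
    (hx : ∀ c : TypeIB.CN F, (∑ v : TypeIB.VN F, if TypeIB.adj F v c then x v else 0) = 0)
    (hx0 : x ≠ 0) : Fintype.card F + 1 ≤ hamWt x := by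
  have h2 : ∀ a : F, a + a = 0 := fun a => CharTwo.add_self_eq_zero a
  -- Step A: find a nonzero grid coordinate
  have hw : ∃ p : F × TypeIB.Fstar F, x (Sum.inr (Sum.inr p)) ≠ 0 := by
    by_contra hno
    push_neg at hno
    have hv : ∀ y : F, x (Sum.inr (Sum.inl y)) = 0 := by
      intro y
      have h := hx (Sum.inr (Sum.inr (y, ⟨1, one_ne_zero⟩)))
      rw [sum_VN (fun v => if TypeIB.adj F v (Sum.inr (Sum.inr (y, ⟨1, one_ne_zero⟩)))
        then x v else 0)] at h
      unfold TypeIB.adj at h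
      simpa [TypeIB.adj, hno, Finset.sum_ite_eq] using h
    have hr : x (Sum.inl ()) = 0 := by
      have h := hx (Sum.inr (Sum.inl 0))
      rw [sum_VN (fun v => if TypeIB.adj F v (Sum.inr (Sum.inl 0)) then x v else 0)] at h
      simpa [TypeIB.adj, hno] using h
    apply hx0
    funext v
    obtain _ | y | p := v
    · exact hr
    · exact hv y
    · exact hno p
  obtain ⟨⟨i0, j0⟩, hP⟩ := hw
  set P : TypeIB.VN F := Sum.inr (Sum.inr (i0, j0)) with hPdef
  -- the q constraints through P
  set con : F → TypeIB.CN F := fun a =>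
    if h : ((j0 : F) + a * i0 = 0 ∨ (a = 0 ∧ i0 = 0)) then Sum.inr (Sum.inl i0)
    else Sum.inr (Sum.inr (a, ⟨(j0 : F) + a * i0, fun hz => h (Or.inl hz)⟩)) with hcon
  have hadj : ∀ a : F, TypeIB.adj F P (con a) := by
    intro a
    rw [hcon]
    dsimp only
    split
    · simp [TypeIB.adj, hPdef]
    · next h =>
      refine ⟨by ring, fun hh => h (Or.inr ⟨hh.2, hh.1⟩)⟩
  -- each such constraint has another nonzero neighbour
  have hexists : ∀ a : F, ∃ v, v ≠ P ∧ TypeIB.adj F v (con a) ∧ x v ≠ 0 := by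
    intro a
    by_contra hno
    push_neg at hno
    have hsum : (∑ v : TypeIB.VN F, if TypeIB.adj F v (con a) then x v else 0) =
        (if TypeIB.adj F P (con a) then x P else 0) := by
      refine Finset.sum_eq_single P (fun v _ hv => ?_) (by simp)
      by_cases hadj' : TypeIB.adj F v (con a)
      · rw [if_pos hadj', hno v hv hadj']
      · rw [if_neg hadj']
    rw [hx (con a), if_pos (hadj a)] at hsum
    exact hP hsum.symm
  -- uniqueness: distinct constraints share no nonzero neighbour besides P
  have hT : ∀ a1 a2 : F, ((j0 : F) + a1 * i0 = 0 ∨ (a1 = 0 ∧ i0 = 0)) →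
      ((j0 : F) + a2 * i0 = 0 ∨ (a2 = 0 ∧ i0 = 0)) → a1 = a2 := by
    intro a1 a2 h1 h1'
    rcases eq_or_ne i0 0 with hi | hi
    · subst hi
      rcases h1 with h1 | h1
      · exact absurd (by linear_combination h1) j0.2
      · rcases h1' with h1' | h1'
        · exact absurd (by linear_combination h1') j0.2
        · rw [h1.1, h1'.1]
    · have e1 : (j0 : F) + a1 * i0 = 0 := h1.resolve_right (fun h => hi h.2)
      have e2 : (j0 : F) + a2 * i0 = 0 := h1'.resolve_right (fun h => hi h.2)
      have : (a1 - a2) * i0 = 0 := by linear_combination e1 - e2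
      rcases mul_eq_zero.mp this with h | h
      · exact sub_eq_zero.mp h
      · exact absurd h hi
  have hmixed : ∀ (a : F) (b : TypeIB.Fstar F), (b : F) = (j0 : F) + a * i0 →
      ∀ v, v ≠ P → TypeIB.adj F v (Sum.inr (Sum.inl i0)) →
      TypeIB.adj F v (Sum.inr (Sum.inr (a, b))) → False := by
    intro a b hb v hvP h1 h1'
    obtain _ | y | ⟨i, j⟩ := v
    · exact h1'
    · exact h1
    · have hii : i0 = i := h1
      subst hii
      obtain ⟨hb2, -⟩ := h1'
      rw [hb] at hb2
      have hjj : (j0 : F) = (j : F) := by linear_combination hb2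
      exact hvP (by rw [hPdef, show j = j0 from Subtype.ext hjj.symm])
  have helse : ∀ (a1 a2 : F) (b1 b2 : TypeIB.Fstar F), a1 ≠ a2 →
      (b1 : F) = (j0 : F) + a1 * i0 → (b2 : F) = (j0 : F) + a2 * i0 →
      ∀ v, v ≠ P → TypeIB.adj F v (Sum.inr (Sum.inr (a1, b1))) →
      TypeIB.adj F v (Sum.inr (Sum.inr (a2, b2))) → False := by
    intro a1 a2 b1 b2 hne hb1 hb2 v hvP h1 h1'
    obtain _ | y | ⟨i, j⟩ := v
    · exact h1
    · exact hne ((h1 : a1 = y).trans (h1' : a2 = y).symm)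
    · obtain ⟨e1, -⟩ := h1
      obtain ⟨e2, -⟩ := h1'
      rw [hb1] at e1
      rw [hb2] at e2
      have hii : (i - i0) * (a1 - a2) = 0 := by linear_combination e2 - e1
      have hi : i = i0 := by
        rcases mul_eq_zero.mp hii with h | h
        · exact sub_eq_zero.mp h
        · exact absurd (sub_eq_zero.mp h) hne
      subst hi
      have hjj : (j0 : F) = (j : F) := by linear_combination e1
      exact hvP (by rw [hPdef, show j = j0 from Subtype.ext hjj.symm])
  have huniq : ∀ a1 a2 : F, a1 ≠ a2 → ∀ v, v ≠ P →
      TypeIB.adj F v (con a1) → TypeIB.adj F v (con a2) → False := by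
    intro a1 a2 hne v hvP h1 h1'
    rw [hcon] at h1 h1'
    dsimp only at h1 h1'
    by_cases t1 : ((j0 : F) + a1 * i0 = 0 ∨ (a1 = 0 ∧ i0 = 0)) <;>
      by_cases t2 : ((j0 : F) + a2 * i0 = 0 ∨ (a2 = 0 ∧ i0 = 0))
    · exact hne (hT a1 a2 t1 t2)
    · rw [dif_pos t1] at h1
      rw [dif_neg t2] at h1'
      exact hmixed a2 _ rfl v hvP h1 h1'
    · rw [dif_neg t1] at h1
      rw [dif_pos t2] at h1'
      exact hmixed a1 _ rfl v hvP h1' h1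
    · rw [dif_neg t1] at h1
      rw [dif_neg t2] at h1'
      exact helse a1 a2 _ _ hne rfl rfl v hvP h1 h1'
  -- build the injection
  choose g hg1 hg2 hg3 using hexists
  let G : Option F → {v : TypeIB.VN F // x v ≠ 0} := fun o =>
    o.elim ⟨P, hP⟩ (fun a => ⟨g a, hg3 a⟩)
  have hGinj : Function.Injective G := by
    intro o1 o2 h
    have hval : o1.elim P g = o2.elim P g := by
      cases o1 <;> cases o2 <;> simpa [G] using congrArg Subtype.val h
    match o1, o2 with
    | none, none => rfl
    | none, some a => exact absurd hval.symm (hg1 a)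
    | some a, none => exact absurd hval (hg1 a)
    | some a1, some a2 =>
      by_cases hne : a1 = a2
      · rw [hne]
      · exact absurd (huniq a1 a2 hne (g a1) (hg1 a1) (hg2 a1)
          (by rw [show g a1 = g a2 from hval]; exact hg2 a2)) not_false
  have hcard : Fintype.card (Option F) ≤ Fintype.card {v : TypeIB.VN F // x v ≠ 0} :=
    Fintype.card_le_of_injective G hGinj
  rw [Fintype.card_option] at hcard
  rw [hamWt, Nat.card_eq_fintype_card]
  omega

end AuxLemmas

theorem stmt_4 (s : ℕ) (hs : 0 < s)
    (F : Type*) [Field F] [Fintype F] (hF : Fintype.card F = 2 ^ s) :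
    -- the indicator vector is a codeword of the binary code of G(2,s)
    TypeIB.InCode F (ZMod 2) (cw F) ∧
    -- of Hamming weight 2q + 1
    hamWt (cw F) = 2 * 2 ^ s + 1 ∧
    -- consequently q + 1 ≤ d_min ≤ 2q + 1
    2 ^ s + 1 ≤ TypeIB.dmin F (ZMod 2) ∧
    TypeIB.dmin F (ZMod 2) ≤ 2 * 2 ^ s + 1 := by
  haveI hchar : CharP F 2 := by
    have hp : (ringChar F).Prime := CharP.char_is_prime F _
    obtain ⟨n, h⟩ := FiniteField.card F (ringChar F)
    have hdvd : ringChar F ∣ 2 ^ s := by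
      rw [← hF, h.2]
      exact dvd_pow_self _ n.2.ne'
    have h2 : ringChar F = 2 :=
      (Nat.prime_dvd_prime_iff_eq hp Nat.prime_two).mp (hp.dvd_of_dvd_pow hdvd)
    rw [← h2]; exact ringChar.charP F
  have hmem : TypeIB.InCode F (ZMod 2) (cw F) := cw_code s hs hF
  have hpow : 1 ≤ 2 ^ s := Nat.one_le_two_pow
  have hwt : hamWt (cw F) = 2 * 2 ^ s + 1 := by
    rw [cw_wt, hF]; omega
  have hcw0 : cw F ≠ 0 := fun h => one_ne_zero (congrFun h (Sum.inl ()))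
  refine ⟨hmem, hwt, ?_, ?_⟩
  · refine le_csInf ⟨2 * 2 ^ s + 1, cw F, hmem, hcw0, hwt⟩ ?_
    rintro w ⟨x, hx, hx0, rfl⟩
    have hlb := lower_bound x hx hx0
    rwa [hF] at hlb
  · exact Nat.sInf_le ⟨cw F, hmem, hcw0, hwt⟩
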